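/- For a fixed integer k ≥ 2, define the graph G_k on 3k vertices a_1,…,a_k, b_1,…,b_k, s_1,…,s_k as follows: {a_1,…,a_k}, {b_1,…,b_k}, {s_1,…,s_k} are each cliques; a_i is adjacent to b_j if and only if i = j; s_i is adjacent to a_j and to b_j if and only if i ≠ j; and there are no other edges. Then α(G_k) = 2 and ω(G_k) = k + 1. -/

import Mathlib

open SimpleGraph

/-- `P2 + P3`: disjoint union of a 2-vertex path and a 3-vertex path. -/
def p2p3 : SimpleGraph (Fin 5) :=
  SimpleGraph.fromRel fun a b =>
    (a = 0 ∧ b = 1) ∨ (a = 2 ∧ b = 3) ∨ (a = 3 ∧ b = 4)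

/-- `G` contains no induced copy of `H`. -/
def InducedFree {α β : Type*} (H : SimpleGraph α) (G : SimpleGraph β) : Prop :=
  ¬ ∃ f : α ↪ β, ∀ a b, H.Adj a b ↔ G.Adj (f a) (f b)

/-- `s` is a stable (independent) set in `G`. -/
def StableSet {V : Type*} (G : SimpleGraph V) (s : Set V) : Prop :=
  s.Pairwise fun a b => ¬ G.Adj a b

/-- `v 0, v 1, v 2, v 3` are the vertices, in cyclic order, of an induced 4-cycle in `G`. -/
def InducedC4 {V : Type*} (G : SimpleGraph V) (v : Fin 4 → V) : Prop :=
  Function.Injective v ∧ (∀ i : Fin 4, G.Adj (v i) (v (i + 1))) ∧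
    ¬ G.Adj (v 0) (v 2) ∧ ¬ G.Adj (v 1) (v 3)

/-- The stability (independence) number of `G`. -/
noncomputable def indepNum {V : Type*} (G : SimpleGraph V) : ℕ :=
  sSup {n | ∃ s : Finset V, StableSet G ↑s ∧ s.card = n}

/-- The graph `G_k` on three `k`-cliques `{a_i}`, `{b_i}`, `{s_i}`: a perfect matching
`a_i b_i` between the first two cliques, and `s_i` adjacent to `a_j`, `b_j` iff `i ≠ j`. -/
def graphGk (k : ℕ) : SimpleGraph (Fin k ⊕ Fin k ⊕ Fin k) :=
  SimpleGraph.fromRel fun x y =>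
    match x, y with
    | .inl _, .inl _ => True
    | .inr (.inl _), .inr (.inl _) => True
    | .inr (.inr _), .inr (.inr _) => True
    | .inl i, .inr (.inl j) => i = j
    | .inr (.inr i), .inl j => i ≠ j
    | .inr (.inr i), .inr (.inl j) => i ≠ j
    | _, _ => False

-- auxiliary lemmas

lemma gk_stable_card_le (k : ℕ) (s : Finset (Fin k ⊕ Fin k ⊕ Fin k))
    (hs : StableSet (graphGk k) ↑s) : s.card ≤ 2 := by
  by_contra h
  push_neg at h
  obtain ⟨x, hx, y, hy, z, hz, hxy, hxz, hyz⟩ := Finset.two_lt_card.mp h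
  have nxy := hs (Finset.mem_coe.mpr hx) (Finset.mem_coe.mpr hy) hxy
  have nxz := hs (Finset.mem_coe.mpr hx) (Finset.mem_coe.mpr hz) hxz
  have nyz := hs (Finset.mem_coe.mpr hy) (Finset.mem_coe.mpr hz) hyz
  rcases x with i | i | i <;> rcases y with j | j | j <;> rcases z with l | l | l <;>
    simp_all [graphGk]

lemma gk_clique_card_le (k : ℕ) (C : Finset (Fin k ⊕ Fin k ⊕ Fin k))
    (hC : (graphGk k).IsClique ↑C) : C.card ≤ k + 1 := by
  classical
  set IA : Finset (Fin k) := Finset.univ.filter (fun i => Sum.inl i ∈ C) with hIA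
  set IB : Finset (Fin k) := Finset.univ.filter (fun i => Sum.inr (Sum.inl i) ∈ C) with hIB
  set IS : Finset (Fin k) := Finset.univ.filter (fun i => Sum.inr (Sum.inr i) ∈ C) with hIS
  have hsub : C ⊆ IA.image Sum.inl ∪ IB.image (fun i => Sum.inr (Sum.inl i)) ∪
      IS.image (fun i => Sum.inr (Sum.inr i)) := by
    intro x hx
    rcases x with i | i | i <;> simp [hIA, hIB, hIS, hx]
  have hcard : C.card ≤ IA.card + IB.card + IS.card := by
    calc C.card ≤ _ := Finset.card_le_card hsub
    _ ≤ (IA.image Sum.inl ∪ IB.image (fun i => Sum.inr (Sum.inl i))).card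
        + (IS.image (fun i => Sum.inr (Sum.inr i))).card := Finset.card_union_le _ _
    _ ≤ (IA.image Sum.inl).card + (IB.image (fun i => Sum.inr (Sum.inl i))).card
        + (IS.image (fun i => Sum.inr (Sum.inr i))).card := by
          gcongr; exact Finset.card_union_le _ _
    _ ≤ IA.card + IB.card + IS.card := by
          gcongr <;> exact Finset.card_image_le
  have hAS : ∀ i, i ∈ IA → i ∉ IS := by
    intro i hi hsi
    simp only [hIA, Finset.mem_filter] at hi
    simp only [hIS, Finset.mem_filter] at hsi
    have := hC (Finset.mem_coe.mpr hi.2) (Finset.mem_coe.mpr hsi.2) (by simp)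
    simp [graphGk] at this
  have hBS : ∀ i, i ∈ IB → i ∉ IS := by
    intro i hi hsi
    simp only [hIB, Finset.mem_filter] at hi
    simp only [hIS, Finset.mem_filter] at hsi
    have := hC (Finset.mem_coe.mpr hi.2) (Finset.mem_coe.mpr hsi.2) (by simp)
    simp [graphGk] at this
  have hAB : ∀ i j, i ∈ IA → j ∈ IB → i = j := by
    intro i j hi hj
    simp only [hIA, Finset.mem_filter] at hi
    simp only [hIB, Finset.mem_filter] at hj
    have := hC (Finset.mem_coe.mpr hi.2) (Finset.mem_coe.mpr hj.2) (by simp)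
    simpa [graphGk] using this
  rcases IB.eq_empty_or_nonempty with hB | ⟨j, hj⟩
  · have hdisj : Disjoint IA IS := Finset.disjoint_left.mpr hAS
    have : IA.card + IS.card ≤ k := by
      rw [← Finset.card_union_of_disjoint hdisj]
      simpa using Finset.card_le_univ (IA ∪ IS)
    have : IB.card = 0 := by simp [hB]
    omega
  · rcases IA.eq_empty_or_nonempty with hA | ⟨i, hi⟩
    · have hdisj : Disjoint IB IS := Finset.disjoint_left.mpr hBS
      have : IB.card + IS.card ≤ k := by
        rw [← Finset.card_union_of_disjoint hdisj]
        simpa using Finset.card_le_univ (IB ∪ IS)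
      have : IA.card = 0 := by simp [hA]
      omega
    · have hA1 : IA ⊆ {i} := fun x hx => by
        have := (hAB x j hx hj).trans (hAB i j hi hj).symm
        simp [this]
      have hB1 : IB ⊆ {j} := fun x hx => by
        have := ((hAB i x hi hx).symm).trans (hAB i j hi hj)
        simp [this]
      have hS : IS ⊆ Finset.univ.erase i := fun x hx => by
        refine Finset.mem_erase.mpr ⟨fun h => hAS i hi (h ▸ hx), Finset.mem_univ _⟩
      have h1 : IA.card ≤ 1 := by simpa using Finset.card_le_card hA1
      have h2 : IB.card ≤ 1 := by simpa using Finset.card_le_card hB1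
      have h3 : IS.card ≤ k - 1 := by
        have := Finset.card_le_card hS
        simpa [Finset.card_erase_of_mem] using this
      have hk1 : 1 ≤ k := Fin.pos i
      omega

lemma gk_stable_two (k : ℕ) (hk : 2 ≤ k) :
    ∃ s : Finset (Fin k ⊕ Fin k ⊕ Fin k), StableSet (graphGk k) ↑s ∧ s.card = 2 := by
  classical
  refine ⟨{Sum.inl ⟨0, by omega⟩, Sum.inr (Sum.inl ⟨1, by omega⟩)}, ?_, ?_⟩
  · intro x hx y hy hne
    simp only [Finset.coe_insert, Finset.coe_singleton, Set.mem_insert_iff,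
      Set.mem_singleton_iff] at hx hy
    rcases hx with rfl | rfl <;> rcases hy with rfl | rfl <;> simp_all [graphGk]
  · simp

lemma gk_clique_big (k : ℕ) (hk : 2 ≤ k) :
    ∃ C : Finset (Fin k ⊕ Fin k ⊕ Fin k),
      (graphGk k).IsClique ↑C ∧ C.card = k + 1 := by
  classical
  set i0 : Fin k := ⟨0, by omega⟩ with hi0
  refine ⟨insert (Sum.inl i0) (insert (Sum.inr (Sum.inl i0))
    ((Finset.univ.erase i0).image (fun i => Sum.inr (Sum.inr i)))), ?_, ?_⟩
  · intro x hx y hy hne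
    simp only [Finset.coe_insert, Set.mem_insert_iff, Finset.mem_coe,
      Finset.mem_insert, Finset.mem_image, Finset.mem_erase] at hx hy
    rcases hx with rfl | rfl | ⟨i, ⟨hi, _⟩, rfl⟩ <;>
      rcases hy with rfl | rfl | ⟨j, ⟨hj, _⟩, rfl⟩ <;>
      simp_all [graphGk]
  · rw [Finset.card_insert_of_notMem (by simp), Finset.card_insert_of_notMem (by simp),
      Finset.card_image_of_injective _ (by intro a b h; simpa using h),
      Finset.card_erase_of_mem (Finset.mem_univ _)]
    simp; omega

theorem stmt15 (k : ℕ) (hk : 2 ≤ k) :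
    _root_.indepNum (graphGk k) = 2 ∧ (graphGk k).cliqueNum = k + 1 := by
  obtain ⟨s2, hs2, hc2⟩ := gk_stable_two k hk
  obtain ⟨C, hC, hCc⟩ := gk_clique_big k hk
  constructor
  · apply le_antisymm
    · refine csSup_le ⟨2, s2, hs2, hc2⟩ ?_
      rintro n ⟨s, hs, rfl⟩
      exact gk_stable_card_le k s hs
    · exact le_csSup ⟨2, by rintro n ⟨s, hs, rfl⟩; exact gk_stable_card_le k s hs⟩
        ⟨s2, hs2, hc2⟩
  · apply le_antisymm
    · refine csSup_le ⟨0, ∅, SimpleGraph.isNClique_empty.mpr rfl⟩ ?_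
      rintro n ⟨s, hs⟩
      rw [← hs.2]
      exact gk_clique_card_le k s hs.1
    · exact le_csSup ⟨k + 1, by rintro n ⟨s, hs⟩; rw [← hs.2]; exact gk_clique_card_le k s hs.1⟩
        ⟨C, hC, hCc⟩
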